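/- For the exponential kernel β(t) = γ exp(−ηt) with γ, η > 0, uniform time step τ > 0 and nodes t_i = iτ, the double sum bound τ Σ_{n=1}^{m} (τ Σ_{i=1}^{n} β(t_n − t_i) a_i)^2 ≤ (γ² e^{2ητ}/(2η)) τ² Σ_{n=1}^{m} Σ_{i=1}^{n} a_i² holds for any nonnegative reals a_1, …, a_m. -/

import Mathlib

open Finset Real

lemma geom_sum_le_inv {r : ℝ} (h0 : 0 ≤ r) (h1 : r < 1) (n : ℕ) :
    ∑ j ∈ Finset.range n, r ^ j ≤ (1 - r)⁻¹ := by
  have h1r : 0 < 1 - r := by linarith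
  rw [geom_sum_eq (ne_of_lt h1)]
  rw [div_le_iff_of_neg (by linarith : r - 1 < 0)]
  have hrn : 0 ≤ r ^ n := pow_nonneg h0 n
  have h2 : (1 - r)⁻¹ * (r - 1) = -1 := by field_simp; ring
  linarith

lemma geom_bound (η τ : ℝ) (hη : 0 < η) (hτ : 0 < τ) (n : ℕ) (hn : 1 ≤ n) :
    τ * ∑ i ∈ Finset.Icc 1 n, Real.exp (-(2 * η) * ((n : ℝ) * τ - (i : ℝ) * τ))
      ≤ Real.exp (2 * η * τ) / (2 * η) := by
  set r : ℝ := Real.exp (-(2 * η * τ)) with hr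
  have hr0 : 0 < r := Real.exp_pos _
  have hr1 : r < 1 := Real.exp_lt_one_iff.mpr (by nlinarith)
  have key : ∑ i ∈ Finset.Icc 1 n, Real.exp (-(2 * η) * ((n : ℝ) * τ - (i : ℝ) * τ))
      = ∑ j ∈ Finset.range n, r ^ j := by
    apply Finset.sum_nbij' (fun i => n - i) (fun j => n - j)
    · intro i hi
      simp only [Finset.mem_Icc] at hi
      simp only [Finset.mem_range]; omega
    · intro j hj
      simp only [Finset.mem_range] at hj
      simp only [Finset.mem_Icc]; omega
    · intro i hi; simp only [Finset.mem_Icc] at hi; omega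
    · intro j hj; simp only [Finset.mem_range] at hj; omega
    · intro i hi
      simp only [Finset.mem_Icc] at hi
      rw [hr, ← Real.exp_nat_mul]
      congr 1
      have : ((n - i : ℕ) : ℝ) = (n : ℝ) - (i : ℝ) := by
        push_cast [Nat.cast_sub hi.2]; ring
      rw [this]; ring
  rw [key]
  have h1 := geom_sum_le_inv hr0.le hr1 n
  have h1r : 0 < 1 - r := by linarith
  calc τ * ∑ j ∈ Finset.range n, r ^ j ≤ τ * (1 - r)⁻¹ := by
        exact mul_le_mul_of_nonneg_left h1 hτ.le
    _ ≤ Real.exp (2 * η * τ) / (2 * η) := by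
        rw [← div_eq_mul_inv, div_le_div_iff₀ h1r (by linarith)]
        have hexp : Real.exp (2 * η * τ) * r = 1 := by
          rw [hr, ← Real.exp_add]; simp
        have h2 : 2 * η * τ + 1 ≤ Real.exp (2 * η * τ) :=
          Real.add_one_le_exp _
        nlinarith

theorem kernel_double_sum_bound
    (γ η τ : ℝ) (hγ : 0 < γ) (hη : 0 < η) (hτ : 0 < τ)
    (m : ℕ) (hm : 1 ≤ m) (a : ℕ → ℝ) (ha : ∀ i, 0 ≤ a i) :
    τ * ∑ n ∈ Finset.Icc 1 m,
        (τ * ∑ i ∈ Finset.Icc 1 n,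
            γ * Real.exp (-η * ((n : ℝ) * τ - (i : ℝ) * τ)) * a i) ^ 2
      ≤ (γ ^ 2 * Real.exp (2 * η * τ) / (2 * η)) * τ ^ 2 *
          ∑ n ∈ Finset.Icc 1 m, ∑ i ∈ Finset.Icc 1 n, (a i) ^ 2 := by
  have main : ∀ n ∈ Finset.Icc 1 m,
      (τ * ∑ i ∈ Finset.Icc 1 n,
          γ * Real.exp (-η * ((n : ℝ) * τ - (i : ℝ) * τ)) * a i) ^ 2
        ≤ (γ ^ 2 * Real.exp (2 * η * τ) / (2 * η)) * τ *
            ∑ i ∈ Finset.Icc 1 n, (a i) ^ 2 := by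
    intro n hn
    simp only [Finset.mem_Icc] at hn
    have hcs := Finset.sum_mul_sq_le_sq_mul_sq (Finset.Icc 1 n)
      (fun i => γ * Real.exp (-η * ((n : ℝ) * τ - (i : ℝ) * τ))) a
    have hsq : ∑ i ∈ Finset.Icc 1 n,
        (γ * Real.exp (-η * ((n : ℝ) * τ - (i : ℝ) * τ))) ^ 2
        = γ ^ 2 * ∑ i ∈ Finset.Icc 1 n,
            Real.exp (-(2 * η) * ((n : ℝ) * τ - (i : ℝ) * τ)) := by
      rw [Finset.mul_sum]
      apply Finset.sum_congr rfl
      intro i _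
      rw [mul_pow]
      congr 1
      rw [sq, ← Real.exp_add]
      congr 1; ring
    have hgb := geom_bound η τ hη hτ n hn.1
    have hsum_sq_nonneg : 0 ≤ ∑ i ∈ Finset.Icc 1 n, (a i) ^ 2 :=
      Finset.sum_nonneg fun i _ => sq_nonneg _
    have hE : 0 ≤ ∑ i ∈ Finset.Icc 1 n,
        Real.exp (-(2 * η) * ((n : ℝ) * τ - (i : ℝ) * τ)) :=
      Finset.sum_nonneg fun i _ => (Real.exp_pos _).le
    calc (τ * ∑ i ∈ Finset.Icc 1 n,
            γ * Real.exp (-η * ((n : ℝ) * τ - (i : ℝ) * τ)) * a i) ^ 2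
        = τ ^ 2 * (∑ i ∈ Finset.Icc 1 n,
            γ * Real.exp (-η * ((n : ℝ) * τ - (i : ℝ) * τ)) * a i) ^ 2 := by ring
      _ ≤ τ ^ 2 * ((γ ^ 2 * ∑ i ∈ Finset.Icc 1 n,
            Real.exp (-(2 * η) * ((n : ℝ) * τ - (i : ℝ) * τ))) *
            ∑ i ∈ Finset.Icc 1 n, (a i) ^ 2) := by
          rw [← hsq]
          exact mul_le_mul_of_nonneg_left hcs (sq_nonneg τ)
      _ = (γ ^ 2 * (τ * ∑ i ∈ Finset.Icc 1 n,
            Real.exp (-(2 * η) * ((n : ℝ) * τ - (i : ℝ) * τ)))) *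
            (τ * ∑ i ∈ Finset.Icc 1 n, (a i) ^ 2) := by ring
      _ ≤ (γ ^ 2 * (Real.exp (2 * η * τ) / (2 * η))) *
            (τ * ∑ i ∈ Finset.Icc 1 n, (a i) ^ 2) := by
          apply mul_le_mul_of_nonneg_right
          · exact mul_le_mul_of_nonneg_left hgb (sq_nonneg γ)
          · positivity
      _ = (γ ^ 2 * Real.exp (2 * η * τ) / (2 * η)) * τ *
            ∑ i ∈ Finset.Icc 1 n, (a i) ^ 2 := by ring
  calc τ * ∑ n ∈ Finset.Icc 1 m,
        (τ * ∑ i ∈ Finset.Icc 1 n,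
            γ * Real.exp (-η * ((n : ℝ) * τ - (i : ℝ) * τ)) * a i) ^ 2
      ≤ τ * ∑ n ∈ Finset.Icc 1 m,
          ((γ ^ 2 * Real.exp (2 * η * τ) / (2 * η)) * τ *
            ∑ i ∈ Finset.Icc 1 n, (a i) ^ 2) := by
        exact mul_le_mul_of_nonneg_left (Finset.sum_le_sum main) hτ.le
    _ = (γ ^ 2 * Real.exp (2 * η * τ) / (2 * η)) * τ ^ 2 *
          ∑ n ∈ Finset.Icc 1 m, ∑ i ∈ Finset.Icc 1 n, (a i) ^ 2 := by
        rw [Finset.mul_sum, Finset.mul_sum]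
        apply Finset.sum_congr rfl
        intro n _
        ring
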